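/- Let Φ_1, …, Φ_K : ℝ^N → ℝ be convex functions and let H_1, …, H_K : ℝ → ℝ be concave differentiable functions. Suppose Slater's condition holds: there exist w' ∈ Ω and t' > 0 with Φ_k(w') < H_k(t') for all k = 1, …, K. Let (w*, t*) be feasible with t* > 0, i.e., w* ∈ Ω, t* > 0, and Φ_k(w*) ≤ H_k(t*) for all k. Then (w*, t*) minimizes t over the feasible set {(w, t) : w ∈ Ω, t ≥ 0, Φ_k(w) ≤ H_k(t) for all k = 1, …, K} if and only if there exist η_1, …, η_K ≥ 0 such that (1) Σ_{k=1}^K η_k H_k'(t*) = 1, (2) η_k (Φ_k(w*) − H_k(t*)) = 0 for all k = 1, …, K, and (3) w* minimizes Σ_{k=1}^K η_k Φ_k over Ω. -/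

import Mathlib

open Finset Matrix

noncomputable section

attribute [local instance] Matrix.normedAddCommGroup Matrix.normedSpace

/-- Dot product of two real vectors indexed by a finite type. -/
def dotp {α : Type*} [Fintype α] (g w : α → ℝ) : ℝ := ∑ i, g i * w i

/-- The probability simplex Ω in ℝ^N. -/
def simplex (N : ℕ) : Set (Fin N → ℝ) := {w | (∑ i, w i) = 1 ∧ ∀ i, 0 ≤ w i}

/-- The subdifferential of a convex function `Φ : ℝ^N → ℝ` at `w`. -/
def subdiff {N : ℕ} (Φ : (Fin N → ℝ) → ℝ) (w : Fin N → ℝ) : Set (Fin N → ℝ) :=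
  {g | ∀ w', dotp g (w' - w) ≤ Φ w' - Φ w}

/-- The i-th standard basis vector of ℝ^N. -/
def stdBasis {N : ℕ} (i : Fin N) : Fin N → ℝ := fun j => if j = i then 1 else 0

/-- The information matrix `I(w) = Σ_i w_i z_i z_iᵀ`. -/
def infoMat {N q : ℕ} (z : Fin N → Fin q → ℝ) (w : Fin N → ℝ) :
    Matrix (Fin q) (Fin q) ℝ := ∑ i, w i • Matrix.vecMulVec (z i) (z i)

/-- The smallest eigenvalue of a (symmetric) real matrix `M`. -/
def lambdaMin {q : ℕ} (M : Matrix (Fin q) (Fin q) ℝ) : ℝ :=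
  sInf {r : ℝ | ∃ v : Fin q → ℝ, v ≠ 0 ∧ M.mulVec v = r • v}

/- ### Auxiliary lemmas -/

/-- If `a + ε * d < c` for all positive `ε`, then `a ≤ c`. -/
lemma aux_le_of_forall_pos {a d c : ℝ} (h : ∀ ε : ℝ, 0 < ε → a + ε * d < c) : a ≤ c := by
  by_contra hac
  push_neg at hac
  have hd : d < 0 := by have := h 1 one_pos; linarith
  have hε : (0:ℝ) < (a - c) / (-d) := by
    apply div_pos <;> linarith
  have heq : (a - c) / (-d) * d = c - a := by
    rw [div_mul_eq_mul_div, div_eq_iff (show (-d) ≠ 0 by linarith)]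
    ring
  have := h _ hε
  linarith

/-- If `a + s * d < c` for all positive `s`, then `d ≤ 0`. -/
lemma aux_nonpos_of_forall_pos {a d c : ℝ} (h : ∀ s : ℝ, 0 < s → a + s * d < c) : d ≤ 0 := by
  by_contra hd
  push_neg at hd
  rcases le_or_gt c a with h1 | h1
  · have := h 1 one_pos; linarith
  · have hs : (0:ℝ) < (c - a) / d := by apply div_pos <;> linarith
    have heq : (c - a) / d * d = c - a := div_mul_cancel₀ _ (ne_of_gt hd)
    have := h _ hs
    linarith

/-- A convex combination of two numbers both `< c` is `< c`. -/
lemma aux_convex_lt {x y a b c : ℝ} (hx : x < c) (hy : y < c) (ha : 0 ≤ a) (hb : 0 ≤ b)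
    (hab : a + b = 1) : a * x + b * y < c := by
  rcases eq_or_lt_of_le ha with h | h
  · have hb1 : b = 1 := by linarith
    rw [← h, hb1]; linarith
  · have h1 : a * x < a * c := by exact mul_lt_mul_of_pos_left hx h
    have h2 : b * y ≤ b * c := mul_le_mul_of_nonneg_left hy.le hb
    have h3 : a * c + b * c = c := by rw [← add_mul, hab, one_mul]
    linarith

/-- Gradient inequality for a concave differentiable function on ℝ. -/
lemma concave_tangent_le {H : ℝ → ℝ} (hc : ConcaveOn ℝ Set.univ H) (hd : Differentiable ℝ H)
    (a t : ℝ) : H t ≤ H a + deriv H a * (t - a) := by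
  rcases lt_trichotomy t a with h | rfl | h
  · have h1 := hc.deriv_le_slope (Set.mem_univ t) (Set.mem_univ a) h (hd a)
    rw [slope_def_field] at h1
    have h2 : deriv H a * (a - t) ≤ H a - H t := (le_div_iff₀ (by linarith)).mp h1
    nlinarith
  · simp
  · have h1 := hc.slope_le_deriv (Set.mem_univ a) (Set.mem_univ t) h (hd a)
    rw [slope_def_field] at h1
    have h2 : H t - H a ≤ deriv H a * (t - a) := (div_le_iff₀ (by linarith)).mp h1
    linarith

/-- Representation of a continuous linear functional on `(Fin K → ℝ) × ℝ`. -/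
lemma clm_rep {K : ℕ} (f : ((Fin K → ℝ) × ℝ) →L[ℝ] ℝ) (p : (Fin K → ℝ) × ℝ) :
    f p = (∑ k, p.1 k * f ((Pi.single k 1 : Fin K → ℝ), 0)) + p.2 * f (0, 1) := by
  have h1 : p = (∑ k, p.1 k • (((Pi.single k 1 : Fin K → ℝ)), (0:ℝ)))
      + p.2 • ((0 : Fin K → ℝ), (1:ℝ)) := by
    refine Prod.ext ?_ ?_
    · simp only [Prod.fst_add, Prod.fst_sum, Prod.smul_fst, Prod.smul_snd, smul_eq_mul, mul_one,
        Prod.snd_sum]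
      rw [← Finset.univ_sum_single p.1, smul_zero, add_zero]
      refine Finset.sum_congr rfl fun k _ => ?_
      ext j; simp [Pi.single_apply]
    · simp [Prod.snd_sum]
  conv_lhs => rw [h1]
  rw [map_add, map_sum]
  simp only [_root_.map_smul, smul_eq_mul]

lemma single_mul_sum {K : ℕ} (k : Fin K) (v : Fin K → ℝ) :
    ∑ j, (Pi.single k (1:ℝ) : Fin K → ℝ) j * v j = v k := by
  simp [Pi.single_apply]

/-- KKT characterization for the maximin design problem in its epigraph form, with
concave differentiable right-hand sides `H_k(t)` (in the paper, `H_k(t) = h_k(1/t)`). -/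
theorem stmt8 {N K : ℕ}
    (Φ : Fin K → (Fin N → ℝ) → ℝ) (hΦ : ∀ k, ConvexOn ℝ Set.univ (Φ k))
    (H : Fin K → ℝ → ℝ)
    (hHconc : ∀ k, ConcaveOn ℝ Set.univ (H k))
    (hHdiff : ∀ k, Differentiable ℝ (H k))
    (w' : Fin N → ℝ) (t' : ℝ) (hw' : w' ∈ simplex N) (ht' : 0 < t')
    (hslater : ∀ k, Φ k w' < H k t')
    (ws : Fin N → ℝ) (ts : ℝ) (hws : ws ∈ simplex N) (hts : 0 < ts)
    (hfeas : ∀ k, Φ k ws ≤ H k ts) :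
    (∀ w : Fin N → ℝ, ∀ t : ℝ,
        w ∈ simplex N → 0 ≤ t → (∀ k, Φ k w ≤ H k t) → ts ≤ t) ↔
      ∃ η : Fin K → ℝ, (∀ k, 0 ≤ η k) ∧
        (∑ k, η k * deriv (H k) ts) = 1 ∧
        (∀ k, η k * (Φ k ws - H k ts) = 0) ∧
        ∀ w ∈ simplex N, (∑ k, η k * Φ k ws) ≤ ∑ k, η k * Φ k w := by
  constructor
  · -- forward direction: optimality ⟹ KKT multipliers
    intro hopt
    set A : Set ((Fin K → ℝ) × ℝ) :=
      {p | ∃ w ∈ simplex N, ∃ t : ℝ, 0 ≤ t ∧ (∀ k, Φ k w - H k t ≤ p.1 k) ∧ t ≤ p.2} with hA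
    set B : Set ((Fin K → ℝ) × ℝ) := {p | (∀ k, p.1 k < 0) ∧ p.2 < ts} with hB
    have hAconv : Convex ℝ A := by
      rintro p ⟨w1, hw1, t1, ht1, hp1, hp2⟩ q ⟨w2, hw2, t2, ht2, hq1, hq2⟩ a b ha hb hab
      refine ⟨a • w1 + b • w2, ?_, a * t1 + b * t2,
        by nlinarith [mul_nonneg ha ht1, mul_nonneg hb ht2], ?_, ?_⟩
      · constructor
        · have heq : ∑ i, (a • w1 + b • w2) i = a * (∑ i, w1 i) + b * (∑ i, w2 i) := by
            rw [Finset.mul_sum, Finset.mul_sum, ← Finset.sum_add_distrib]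
            refine Finset.sum_congr rfl fun i _ => ?_
            simp [smul_eq_mul]
          rw [heq, hw1.1, hw2.1]; linarith
        · intro i
          have h1 := hw1.2 i; have h2 := hw2.2 i
          simp only [Pi.add_apply, Pi.smul_apply, smul_eq_mul]
          nlinarith [mul_nonneg ha h1, mul_nonneg hb h2]
      · intro k
        have hΦle : Φ k (a • w1 + b • w2) ≤ a * Φ k w1 + b * Φ k w2 := by
          have := (hΦ k).2 (Set.mem_univ w1) (Set.mem_univ w2) ha hb hab
          simpa [smul_eq_mul] using this
        have hHge : a * H k t1 + b * H k t2 ≤ H k (a * t1 + b * t2) := by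
          have := (hHconc k).2 (Set.mem_univ t1) (Set.mem_univ t2) ha hb hab
          simpa [smul_eq_mul] using this
        have h1 := mul_le_mul_of_nonneg_left (hp1 k) ha
        have h2 := mul_le_mul_of_nonneg_left (hq1 k) hb
        simp only [Prod.fst_add, Prod.smul_fst, Pi.add_apply, Pi.smul_apply, smul_eq_mul]
        nlinarith
      · have h1 := mul_le_mul_of_nonneg_left hp2 ha
        have h2 := mul_le_mul_of_nonneg_left hq2 hb
        simp only [Prod.snd_add, Prod.smul_snd, smul_eq_mul]
        linarith
    have hBconv : Convex ℝ B := by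
      rintro p ⟨hp1, hp2⟩ q ⟨hq1, hq2⟩ a b ha hb hab
      constructor
      · intro k
        have h1 := hp1 k; have h2 := hq1 k
        simp only [Prod.fst_add, Prod.smul_fst, Pi.add_apply, Pi.smul_apply, smul_eq_mul]
        exact aux_convex_lt h1 h2 ha hb hab
      · simp only [Prod.snd_add, Prod.smul_snd, smul_eq_mul]
        exact aux_convex_lt hp2 hq2 ha hb hab
    have hBopen : IsOpen B := by
      have h1 : IsOpen {p : (Fin K → ℝ) × ℝ | ∀ k, p.1 k < 0} := by
        have he : {p : (Fin K → ℝ) × ℝ | ∀ k, p.1 k < 0} = ⋂ k, {p | p.1 k < 0} := by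
          ext p; simp
        rw [he]
        exact isOpen_iInter_of_finite fun k =>
          isOpen_lt ((continuous_apply k).comp continuous_fst) continuous_const
      have h2 : IsOpen {p : (Fin K → ℝ) × ℝ | p.2 < ts} :=
        isOpen_lt continuous_snd continuous_const
      exact h1.inter h2
    have hdisj : Disjoint B A := by
      rw [Set.disjoint_left]
      rintro p ⟨hp1, hp2⟩ ⟨w, hw, t, ht, hc1, hc2⟩
      have : ts ≤ t := hopt w t hw ht fun k => by have := hc1 k; have := hp1 k; linarith
      linarith
    obtain ⟨f, c, hfB, hfA⟩ := geometric_hahn_banach_open hBconv hBopen hAconv hdisj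
    set lam : Fin K → ℝ := fun k => f ((Pi.single k 1 : Fin K → ℝ), 0) with hlam
    set mu : ℝ := f (0, 1) with hmu
    have hrep : ∀ p : (Fin K → ℝ) × ℝ, f p = (∑ k, p.1 k * lam k) + p.2 * mu :=
      fun p => clm_rep f p
    have hBval : ∀ (u : Fin K → ℝ) (r : ℝ), (∀ k, u k < 0) → r < ts →
        (∑ k, u k * lam k) + r * mu < c := by
      intro u r h1 h2
      have := hfB (u, r) ⟨h1, h2⟩
      rwa [hrep] at this
    have hAval : ∀ w ∈ simplex N, ∀ t : ℝ, 0 ≤ t →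
        c ≤ (∑ k, (Φ k w - H k t) * lam k) + t * mu := by
      intro w hw t ht
      have := hfA ((fun k => Φ k w - H k t), t) ⟨w, hw, t, ht, fun k => le_rfl, le_rfl⟩
      rwa [hrep] at this
    have hlamnn : ∀ k, 0 ≤ lam k := by
      intro k
      have key : ∀ s : ℝ, 0 < s →
          ((∑ j, (-1 : ℝ) * lam j) + (ts - 1) * mu) + s * (-lam k) < c := by
        intro s hs
        have hmem : ∀ j, (-1 : ℝ) + (-s) * (Pi.single k (1:ℝ) : Fin K → ℝ) j < 0 := by
          intro j
          rcases eq_or_ne j k with rfl | h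
          · rw [Pi.single_eq_same]; linarith
          · rw [Pi.single_eq_of_ne h]; norm_num
        have hb := hBval (fun j => -1 + (-s) * (Pi.single k (1:ℝ) : Fin K → ℝ) j) (ts - 1)
          hmem (by linarith)
        have hsum : ∑ j, ((-1 : ℝ) + (-s) * (Pi.single k (1:ℝ) : Fin K → ℝ) j) * lam j
            = (∑ j, (-1 : ℝ) * lam j) + (-s) * lam k := by
          rw [show (∑ j, ((-1 : ℝ) + (-s) * (Pi.single k (1:ℝ) : Fin K → ℝ) j) * lam j)
              = ∑ j, ((-1 : ℝ) * lam j + (-s) * ((Pi.single k (1:ℝ) : Fin K → ℝ) j * lam j))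
              from Finset.sum_congr rfl fun j _ => by ring]
          rw [Finset.sum_add_distrib]
          congr 1
          rw [← Finset.mul_sum, single_mul_sum]
        rw [hsum] at hb
        linarith
      have := aux_nonpos_of_forall_pos key
      linarith
    have hmunn : 0 ≤ mu := by
      have key : ∀ s : ℝ, 0 < s →
          ((∑ j, (-1 : ℝ) * lam j) + (ts - 1) * mu) + s * (-mu) < c := by
        intro s hs
        have hb := hBval (fun _ => -1) (ts - 1 - s) (fun _ => by norm_num) (by linarith)
        have hr : (ts - 1 - s) * mu = (ts - 1) * mu + s * (-mu) := by ring
        rw [hr] at hb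
        linarith
      have := aux_nonpos_of_forall_pos key
      linarith
    have hmuts : ts * mu ≤ c := by
      apply aux_le_of_forall_pos (d := -(∑ j, lam j) - mu)
      intro ε hε
      have hb := hBval (fun _ => -ε) (ts - ε) (fun _ => by show -ε < 0; linarith) (by linarith)
      have hsum : ∑ j, (-ε) * lam j = -ε * ∑ j, lam j := by rw [← Finset.mul_sum]
      rw [hsum] at hb
      nlinarith [hb]
    have hmupos : 0 < mu := by
      rcases hmunn.lt_or_eq with h | h
      · exact h
      · exfalso
        have hc0 : (0:ℝ) ≤ c := by rw [← h] at hmuts; linarith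
        by_cases hl : ∀ k, lam k = 0
        · have h1 := hBval (fun _ => -1) (ts - 1) (fun _ => by norm_num) (by linarith)
          have h2 : ∑ k, (-1 : ℝ) * lam k = 0 := by
            apply Finset.sum_eq_zero; intro k _; rw [hl k]; ring
          have h3 := hAval ws hws ts hts.le
          have h4 : ∑ k, (Φ k ws - H k ts) * lam k = 0 :=
            Finset.sum_eq_zero fun k _ => by rw [hl k]; ring
          rw [h4, ← h] at h3
          rw [h2, ← h] at h1
          linarith
        · push_neg at hl
          obtain ⟨k0, hk0⟩ := hl
          have hk0pos : 0 < lam k0 := lt_of_le_of_ne (hlamnn k0) (Ne.symm hk0)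
          have hneg : ∑ k, (Φ k w' - H k t') * lam k < 0 := by
            have := Finset.sum_lt_sum
              (f := fun k => (Φ k w' - H k t') * lam k) (g := fun _ => (0:ℝ))
              (fun k _ => mul_nonpos_of_nonpos_of_nonneg
                (by linarith [hslater k]) (hlamnn k))
              ⟨k0, Finset.mem_univ k0,
                mul_neg_of_neg_of_pos (by linarith [hslater k0]) hk0pos⟩
            simpa using this
          have := hAval w' hw' t' ht'.le
          rw [← h] at this
          nlinarith
    set η : Fin K → ℝ := fun k => lam k / mu with hη
    have hηnn : ∀ k, 0 ≤ η k := fun k => div_nonneg (hlamnn k) hmunn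
    have hηmu : ∀ k, η k * mu = lam k := fun k => div_mul_cancel₀ _ (ne_of_gt hmupos)
    have hLag : ∀ w ∈ simplex N, ∀ t : ℝ, 0 ≤ t →
        ts ≤ t + ∑ k, η k * (Φ k w - H k t) := by
      intro w hw t ht
      have h1 := hAval w hw t ht
      have h3 : (∑ k, η k * (Φ k w - H k t)) * mu = ∑ k, (Φ k w - H k t) * lam k := by
        rw [Finset.sum_mul]
        refine Finset.sum_congr rfl fun k _ => ?_
        rw [show η k * (Φ k w - H k t) * mu = (Φ k w - H k t) * (η k * mu) from by ring, hηmu k]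
      have h4 : ts * mu ≤ (t + ∑ k, η k * (Φ k w - H k t)) * mu := by
        rw [add_mul, h3]; linarith
      exact le_of_mul_le_mul_right h4 hmupos
    have hslack : ∀ k, η k * (Φ k ws - H k ts) = 0 := by
      have h0 := hLag ws hws ts hts.le
      have hsum0 : 0 ≤ ∑ k, η k * (Φ k ws - H k ts) := by linarith
      have hnp : ∀ k ∈ Finset.univ, η k * (Φ k ws - H k ts) ≤ 0 := fun k _ =>
        mul_nonpos_of_nonneg_of_nonpos (hηnn k) (by linarith [hfeas k])
      have hz : ∑ k, η k * (Φ k ws - H k ts) = 0 :=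
        le_antisymm (Finset.sum_nonpos hnp) hsum0
      intro k
      exact (Finset.sum_eq_zero_iff_of_nonpos hnp).mp hz k (Finset.mem_univ k)
    have hΦH : ∑ k, η k * H k ts = ∑ k, η k * Φ k ws :=
      Finset.sum_congr rfl fun k _ => by linear_combination -(hslack k)
    refine ⟨η, hηnn, ?_, hslack, ?_⟩
    · -- derivative condition
      set g : ℝ → ℝ := fun t => t + ∑ k, η k * (H k ts - H k t) with hg
      have hgts : g ts = ts := by simp [hg]
      have hglb : ∀ t : ℝ, 0 < t → g ts ≤ g t := by
        intro t ht
        have h0 := hLag ws hws t ht.le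
        have hsub : ∑ k, η k * (Φ k ws - H k t)
            = (∑ k, η k * Φ k ws) - ∑ k, η k * H k t := by
          rw [← Finset.sum_sub_distrib]
          exact Finset.sum_congr rfl fun k _ => by ring
        have hsub2 : ∑ k, η k * (H k ts - H k t)
            = (∑ k, η k * H k ts) - ∑ k, η k * H k t := by
          rw [← Finset.sum_sub_distrib]
          exact Finset.sum_congr rfl fun k _ => by ring
        rw [hsub] at h0
        rw [hgts]
        show ts ≤ t + ∑ k, η k * (H k ts - H k t)
        rw [hsub2]
        linarith [hΦH]
      have hloc : IsLocalMin g ts := by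
        filter_upwards [(isOpen_Ioi : IsOpen (Set.Ioi (0:ℝ))).mem_nhds (Set.mem_Ioi.mpr hts)]
          with t ht
        exact hglb t ht
      have hder : HasDerivAt g (1 + ∑ k, -(η k * deriv (H k) ts)) ts := by
        have h1 : HasDerivAt (fun t : ℝ => ∑ k, η k * (H k ts - H k t))
            (∑ k, -(η k * deriv (H k) ts)) ts := by
          apply HasDerivAt.fun_sum
          intro k _
          have h2 : HasDerivAt (fun t => H k ts - H k t) (-(deriv (H k) ts)) ts :=
            HasDerivAt.const_sub _ ((hHdiff k) ts).hasDerivAt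
          have h3 := h2.const_mul (η k)
          convert h3 using 1
          · rfl
          ring
        have h4 := (hasDerivAt_id ts).fun_add h1
        simpa using h4
      have h0 := hloc.hasDerivAt_eq_zero hder
      have h5 : ∑ k, -(η k * deriv (H k) ts) = -∑ k, η k * deriv (H k) ts := by
        rw [Finset.sum_neg_distrib]
      rw [h5] at h0
      linarith
    · -- minimality in w
      intro w hw
      have h0 := hLag w hw ts hts.le
      have h1 : 0 ≤ ∑ k, η k * (Φ k w - H k ts) := by linarith
      have hsub : ∑ k, η k * (Φ k w - H k ts)
          = (∑ k, η k * Φ k w) - ∑ k, η k * H k ts := by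
        rw [← Finset.sum_sub_distrib]
        exact Finset.sum_congr rfl fun k _ => by ring
      rw [hsub, hΦH] at h1
      linarith
  · -- reverse direction: KKT multipliers ⟹ optimality
    rintro ⟨η, hηnn, hηsum, hslack, hηmin⟩ w t hw ht hf2
    have hgrad : ∀ k, H k t ≤ H k ts + deriv (H k) ts * (t - ts) :=
      fun k => concave_tangent_le (hHconc k) (hHdiff k) ts t
    have h1 : ∑ k, η k * Φ k w ≤ ∑ k, η k * H k t :=
      Finset.sum_le_sum fun k _ => mul_le_mul_of_nonneg_left (hf2 k) (hηnn k)
    have h2 : ∑ k, η k * H k t ≤ ∑ k, η k * (H k ts + deriv (H k) ts * (t - ts)) :=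
      Finset.sum_le_sum fun k _ => mul_le_mul_of_nonneg_left (hgrad k) (hηnn k)
    have h3 : ∑ k, η k * (H k ts + deriv (H k) ts * (t - ts))
        = (∑ k, η k * H k ts) + (t - ts) * ∑ k, η k * deriv (H k) ts := by
      rw [Finset.mul_sum, ← Finset.sum_add_distrib]
      exact Finset.sum_congr rfl fun k _ => by ring
    have h4 : ∑ k, η k * H k ts = ∑ k, η k * Φ k ws :=
      Finset.sum_congr rfl fun k _ => by linear_combination -(hslack k)
    have h5 := hηmin w hw
    rw [h3, hηsum, h4] at h2
    linarith
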